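/- Let Q be a division ring and let e : Matrix (Fin n) (Fin n) Q be idempotent (e*e = e). Then there exist k ≤ n and matrices p, q : Matrix (Fin n) (Fin n) Q with p*q = 1 and q*p = 1 such that q*e*p is the diagonal 0–1 matrix with exactly its first k diagonal entries equal to 1, i.e. (q*e*p) i j = 1 if i = j and (i : ℕ) < k, and 0 otherwise. (Every idempotent matrix over a division ring is conjugate, by a change of basis adapted to its column space and null space, to a block identity matrix.) -/

import Mathlib

open Matrix

/-- Every idempotent matrix over a division ring is conjugate, by a change of
basis, to a diagonal 0–1 matrix whose first `k` diagonal entries equal `1`. -/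
theorem idempotent_conjugate_block_identity {Q : Type*} [DivisionRing Q] {n : ℕ}
    (e : Matrix (Fin n) (Fin n) Q) (he : e * e = e) :
    ∃ k : ℕ, k ≤ n ∧
      ∃ p q : Matrix (Fin n) (Fin n) Q, p * q = 1 ∧ q * p = 1 ∧
        ∀ i j : Fin n,
          (q * e * p) i j = if i = j ∧ (i : ℕ) < k then 1 else 0 := by
  classical
  set f : (Fin n → Q) →ₗ[Q] (Fin n → Q) := e.vecMulLinear with hf
  have hff : ∀ v, f (f v) = f v := by
    intro v
    simp only [hf, Matrix.vecMulLinear_apply, Matrix.vecMul_vecMul, he]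
  set R := LinearMap.range f with hR
  set K := LinearMap.ker f with hK
  have hfixR : ∀ x ∈ R, f x = x := by
    rintro x ⟨y, rfl⟩; exact hff y
  have hcompl : IsCompl R K := by
    constructor
    · rw [disjoint_iff]
      ext x
      simp only [Submodule.mem_inf, Submodule.mem_bot, hK, LinearMap.mem_ker]
      constructor
      · rintro ⟨hx, hx0⟩
        rw [← hfixR x hx, hx0]
      · rintro rfl
        exact ⟨Submodule.zero_mem _, map_zero f⟩
    · rw [codisjoint_iff]
      rw [eq_top_iff]
      intro x _
      rw [Submodule.mem_sup]
      refine ⟨f x, ⟨x, rfl⟩, x - f x, ?_, by abel⟩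
      rw [hK, LinearMap.mem_ker, map_sub, hff, sub_self]
  -- finite-dimensional bases
  set r := Module.finrank Q R with hr
  set s := Module.finrank Q K with hs
  let bR : Module.Basis (Fin r) Q R := Module.finBasis Q R
  let bK : Module.Basis (Fin s) Q K := Module.finBasis Q K
  let φ : (R × K) ≃ₗ[Q] (Fin n → Q) := Submodule.prodEquivOfIsCompl R K hcompl
  let b0 : Module.Basis (Fin r ⊕ Fin s) Q (Fin n → Q) := (bR.prod bK).map φ
  have hrs : r + s = n := by
    have h1 := Module.finrank_eq_card_basis b0
    simpa using h1.symm
  let g : (Fin r ⊕ Fin s) ≃ Fin n := finSumFinEquiv.trans (finCongr hrs)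
  let b : Module.Basis (Fin n) Q (Fin n → Q) := b0.reindex g
  -- membership of basis vectors
  have hmemR : ∀ t : Fin r, b0 (Sum.inl t) ∈ R := by
    intro t
    simp only [b0, Module.Basis.map_apply, Module.Basis.prod_apply, Sum.elim_inl,
      LinearMap.coe_inl, Function.comp_apply]
    simp [φ, Submodule.coe_prodEquivOfIsCompl]
  have hmemK : ∀ t : Fin s, b0 (Sum.inr t) ∈ K := by
    intro t
    simp only [b0, Module.Basis.map_apply, Module.Basis.prod_apply, Sum.elim_inr,
      LinearMap.coe_inr, Function.comp_apply]
    simp [φ, Submodule.coe_prodEquivOfIsCompl]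
  have hfb : ∀ i : Fin n, f (b i) = if (i : ℕ) < r then b i else 0 := by
    intro i
    obtain ⟨z, rfl⟩ := g.surjective i
    have hbz : b (g z) = b0 z := by
      rw [Module.Basis.reindex_apply, Equiv.symm_apply_apply]
    cases z with
    | inl t =>
      have hv : ((g (Sum.inl t) : Fin n) : ℕ) = (t : ℕ) := by
        simp [g, finSumFinEquiv_apply_left]
      rw [hv, if_pos t.isLt, hbz]
      exact hfixR _ (hmemR t)
    | inr t =>
      have hv : ((g (Sum.inr t) : Fin n) : ℕ) = r + (t : ℕ) := by
        simp [g, finSumFinEquiv_apply_right]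
      rw [hv, if_neg (by omega), hbz]
      exact hmemK t
  -- the change of basis matrices
  let p : Matrix (Fin n) (Fin n) Q := Matrix.of fun m j => b.repr (Pi.single m 1) j
  let q : Matrix (Fin n) (Fin n) Q := Matrix.of fun i l => b i l
  -- key computation: v ᵥ* p = coordinates of v
  have key : ∀ (v : Fin n → Q) (j : Fin n),
      ∑ l, v l * b.repr (Pi.single l 1) j = b.repr v j := by
    intro v j
    have hv : v = ∑ l, v l • (Pi.single l 1 : Fin n → Q) := by
      ext j'
      simp [Pi.single_apply]
    conv_rhs => rw [hv, map_sum]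
    rw [Finsupp.finset_sum_apply]
    simp [smul_eq_mul]
  have hpq : p * q = 1 := by
    ext m j
    have h1 := congrFun (b.sum_repr (Pi.single m (1 : Q))) j
    simp only [Finset.sum_apply, Pi.smul_apply, smul_eq_mul] at h1
    simp only [Matrix.mul_apply, p, q, Matrix.of_apply, h1]
    simp [Matrix.one_apply, Pi.single_apply, eq_comm]
  have hqp : q * p = 1 := by
    ext i j
    simp only [Matrix.mul_apply, p, q, Matrix.of_apply]
    rw [key (b i) j]
    simp [Matrix.one_apply, Module.Basis.repr_self, Finsupp.single_apply]
  refine ⟨r, by omega, p, q, hpq, hqp, ?_⟩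
  intro i j
  have hqe : ∀ l, (q * e) i l = f (b i) l := by
    intro l
    simp [Matrix.mul_apply, q, hf, Matrix.vecMulLinear_apply, Matrix.vecMul, dotProduct]
  have : (q * e * p) i j = b.repr (f (b i)) j := by
    simp only [Matrix.mul_apply, p, Matrix.of_apply]
    rw [← key (f (b i)) j]
    exact Finset.sum_congr rfl fun l _ => by rw [← hqe l]; rfl
  rw [this, hfb i]
  by_cases hi : (i : ℕ) < r
  · rw [if_pos hi]
    by_cases hij : i = j
    · subst hij; simp [Module.Basis.repr_self, Finsupp.single_apply, hi]
    · simp [Module.Basis.repr_self, Finsupp.single_apply, hij]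
  · rw [if_neg hi]
    simp [hi]
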